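/- Let R_1, …, R_λ be doubly stochastic t×t matrices and suppose the product R = R_λ···R_1 satisfies ‖R[i] − (1/t)𝟙‖_∞ ≤ 1/n^{1.5} for every row i. Let T⁰ ∈ ℤ^t_{≥0} with Σ_i T⁰_i = N, and define iteratively T^q satisfying componentwise R_{q}·T^{q-1} − t·𝟙 ≤ T^q ≤ R_{q}·T^{q-1} + t·𝟙. Then for each i: R[i]·T⁰ − λt ≤ T^λ_i ≤ R[i]·T⁰ + λt, and hence N/t − N/n^{1.5} − λt ≤ T^λ_i ≤ N/t + N/n^{1.5} + λt. -/

import Mathlib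

open Finset

/-- Let `R_1, …, R_λ` be doubly stochastic `t×t` matrices whose product
`R = R_λ⋯R_1` has all entries within `1/n^{1.5}` of `1/t`. If token counts `T^q` follow the
walks up to additive error `±t` per step, starting from an integral vector `T⁰` of total mass
`N`, then `R[i]·T⁰ − λt ≤ T^λ_i ≤ R[i]·T⁰ + λt`, and hence
`N/t − N/n^{1.5} − λt ≤ T^λ_i ≤ N/t + N/n^{1.5} + λt`. -/
theorem dispersion_after_mixing (t n lam N : ℕ)
    (Rm : Fin lam → Matrix (Fin t) (Fin t) ℝ)
    (hstoch : ∀ q : Fin lam, (∀ i j, 0 ≤ Rm q i j) ∧ (∀ i, ∑ j, Rm q i j = 1) ∧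
      (∀ j, ∑ i, Rm q i j = 1))
    (P : Matrix (Fin t) (Fin t) ℝ)
    (hP : P = ((List.ofFn fun q : Fin lam => Rm q).reverse).prod)
    (hmix : ∀ i j, |P i j - 1 / t| ≤ 1 / (n : ℝ) ^ (1.5 : ℝ))
    (T0 : Fin t → ℕ) (hN : ∑ i, T0 i = N)
    (T : ℕ → Fin t → ℝ) (hT0 : ∀ i, T 0 i = (T0 i : ℝ))
    (hstep : ∀ q : Fin lam, ∀ i,
      (Rm q).mulVec (T q) i - t ≤ T (q + 1) i ∧ T (q + 1) i ≤ (Rm q).mulVec (T q) i + t) :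
    ∀ i : Fin t,
      (P.mulVec (fun j => (T0 j : ℝ)) i - lam * t ≤ T lam i ∧
        T lam i ≤ P.mulVec (fun j => (T0 j : ℝ)) i + lam * t) ∧
      ((N : ℝ) / t - (N : ℝ) / (n : ℝ) ^ (1.5 : ℝ) - lam * t ≤ T lam i ∧
        T lam i ≤ (N : ℝ) / t + (N : ℝ) / (n : ℝ) ^ (1.5 : ℝ) + lam * t) := by
  intro i
  set L : List (Matrix (Fin t) (Fin t) ℝ) := List.ofFn (fun q : Fin lam => Rm q) with hL
  set T0' : Fin t → ℝ := fun j => (T0 j : ℝ) with hT0'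
  have key : ∀ q, q ≤ lam → ∀ i,
      |T q i - ((L.take q).reverse.prod).mulVec T0' i| ≤ q * t := by
    intro q
    induction q with
    | zero =>
      intro _ i
      simp [hT0, Matrix.one_mulVec, hT0']
    | succ q ih =>
      intro hq i
      have hqlt : q < lam := hq
      set qf : Fin lam := ⟨q, hqlt⟩ with hqf
      set w : Fin t → ℝ := ((L.take q).reverse.prod).mulVec T0' with hw
      have htake : ((L.take (q+1)).reverse.prod) = Rm qf * (L.take q).reverse.prod := by
        have h1 : L.take (q+1) = L.take q ++ [Rm qf] := by
          rw [List.take_succ]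
          congr 1
          simp [hL, List.getElem?_ofFn, hqlt]
          rfl
        rw [h1, List.reverse_append]
        simp
      have h1 := hstep qf i
      have habs1 : |T (q + 1) i - (Rm qf).mulVec (T q) i| ≤ t := by
        rw [abs_le]; constructor <;> [linarith [h1.2]; linarith [h1.1]]
      have habs2 : |(Rm qf).mulVec (T q) i - (Rm qf).mulVec w i| ≤ q * t := by
        have hdiff : (Rm qf).mulVec (T q) i - (Rm qf).mulVec w i
            = ∑ j, Rm qf i j * (T q j - w j) := by
          simp [Matrix.mulVec, dotProduct, mul_sub, Finset.sum_sub_distrib]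
        rw [hdiff]
        calc |∑ j, Rm qf i j * (T q j - w j)|
            ≤ ∑ j, |Rm qf i j * (T q j - w j)| := Finset.abs_sum_le_sum_abs _ _
          _ ≤ ∑ j, Rm qf i j * (q * t) := by
              refine Finset.sum_le_sum fun j _ => ?_
              rw [abs_mul, abs_of_nonneg ((hstoch qf).1 i j)]
              exact mul_le_mul_of_nonneg_left (ih (le_of_lt hqlt) j) ((hstoch qf).1 i j)
          _ = q * t := by rw [← Finset.sum_mul, (hstoch qf).2.1 i, one_mul]
      have hmv : ((L.take (q+1)).reverse.prod).mulVec T0' i = (Rm qf).mulVec w i := by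
        rw [htake, hw, ← Matrix.mulVec_mulVec]
      rw [hmv]
      calc |T (q + 1) i - (Rm qf).mulVec w i|
          ≤ |T (q + 1) i - (Rm qf).mulVec (T q) i|
            + |(Rm qf).mulVec (T q) i - (Rm qf).mulVec w i| := abs_sub_le _ _ _
        _ ≤ t + q * t := add_le_add habs1 habs2
        _ = (q + 1 : ℕ) * t := by push_cast; ring
  have hfull : (L.take lam).reverse.prod = P := by
    rw [hP, hL]
    congr 1
    rw [List.take_of_length_le (by simp)]
  have hkey := key lam le_rfl i
  rw [hfull] at hkey
  have hkey' := abs_le.mp hkey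
  refine ⟨⟨by linarith [hkey'.1], by linarith [hkey'.2]⟩, ?_⟩
  have ht : (0 : ℝ) < t := by
    have := i.pos
    exact_mod_cast this
  have hNsum : (N : ℝ) = ∑ j, T0' j := by
    rw [← hN]; push_cast [hT0']; rfl
  have hmid : |P.mulVec T0' i - (N : ℝ) / t| ≤ (N : ℝ) / (n : ℝ) ^ (1.5 : ℝ) := by
    have hdiff : P.mulVec T0' i - (N : ℝ) / t = ∑ j, (P i j - 1 / t) * T0' j := by
      rw [hNsum]
      simp [Matrix.mulVec, dotProduct, sub_mul, Finset.sum_sub_distrib,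
        Finset.sum_div, div_eq_mul_inv, mul_comm, Finset.mul_sum]
    rw [hdiff]
    calc |∑ j, (P i j - 1 / t) * T0' j|
        ≤ ∑ j, |(P i j - 1 / t) * T0' j| := Finset.abs_sum_le_sum_abs _ _
      _ ≤ ∑ j, (1 / (n : ℝ) ^ (1.5 : ℝ)) * T0' j := by
          refine Finset.sum_le_sum fun j _ => ?_
          rw [abs_mul, abs_of_nonneg (by positivity : (0:ℝ) ≤ T0' j)]
          exact mul_le_mul_of_nonneg_right (hmix i j) (by positivity)
      _ = (N : ℝ) / (n : ℝ) ^ (1.5 : ℝ) := by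
          rw [← Finset.mul_sum, ← hNsum]; ring
  have hmid' := abs_le.mp hmid
  constructor <;> [linarith [hkey'.1, hmid'.1]; linarith [hkey'.2, hmid'.2]]
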